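/- Cooperative game, case d0 + d > D/2: suppose v_min < v_max, d0 := d_x(x0, y0) ≤ d_y(x0, y0) (so d0 ≤ D/2), and d0 + d > D/2, where d = T·(v_max − v_min) is the escape distance. Define the final separation s(v_x, v_y) := min(d_x(x_T, y_T), d_y(x_T, y_T)) if x_T ≠ y_T and s(v_x, v_y) := 0 if x_T = y_T. Then: (i) there exists a pair (v_x, v_y) ∈ Γ × Γ with d0 + T·(v_y − v_x) = D/2; (ii) s(v_x, v_y) ≤ D/2 for all (v_x, v_y) ∈ Γ × Γ; and (iii) s(v_x, v_y) = D/2 if and only if d0 + T·(v_y − v_x) = D/2, so the maximizers of s are exactly the pairs with d0 + T·(v_y − v_x) = D/2. -/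

import Mathlib

/-- The reduction of a real number `r` modulo the circuit length `D`: the relative
position on the torus, `(r) mod D = r − D·⌊r/D⌋ ∈ [0, D)`. -/
noncomputable def modD (D r : ℝ) : ℝ := r - D * (⌊r / D⌋ : ℝ)

/-- The directed (clockwise) distance from `x` to `y` on the circuit of length `D`. -/
noncomputable def dirX (D x y : ℝ) : ℝ := if x ≤ y then y - x else D + y - x

/-- The directed (clockwise) distance from `y` to `x` on the circuit of length `D`. -/
noncomputable def dirY (D x y : ℝ) : ℝ := dirX D y x

/-- Final separation of the two buses: the minimal distance between the final
positions after driving at speeds `vx`, `vy` for time `T`, starting from `x0`, `y0`. -/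
noncomputable def sep (D T x0 y0 vx vy : ℝ) : ℝ :=
  if modD D (x0 + T * vx) = modD D (y0 + T * vy) then 0
  else min (dirX D (modD D (x0 + T * vx)) (modD D (y0 + T * vy)))
           (dirY D (modD D (x0 + T * vx)) (modD D (y0 + T * vy)))

lemma modD_nonneg {D : ℝ} (hD : 0 < D) (r : ℝ) : 0 ≤ modD D r := by
  have h1 : ((⌊r / D⌋ : ℤ) : ℝ) ≤ r / D := Int.floor_le _
  have h2 : D * (r / D) = r := by field_simp
  unfold modD
  nlinarith

lemma modD_lt {D : ℝ} (hD : 0 < D) (r : ℝ) : modD D r < D := by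
  have h1 : r / D - 1 < ((⌊r / D⌋ : ℤ) : ℝ) := Int.sub_one_lt_floor _
  have h2 : D * (r / D) = r := by field_simp
  unfold modD
  nlinarith

lemma modD_eq_self {D r : ℝ} (hD : 0 < D) (h0 : 0 ≤ r) (h1 : r < D) :
    modD D r = r := by
  have hfl : ⌊r / D⌋ = 0 := by
    rw [Int.floor_eq_zero_iff]
    exact ⟨div_nonneg h0 hD.le, (div_lt_one hD).2 h1⟩
  simp [modD, hfl]

lemma modD_add_int {D : ℝ} (hD : D ≠ 0) (r : ℝ) (n : ℤ) :
    modD D (r + n * D) = modD D r := by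
  unfold modD
  have h : (r + n * D) / D = r / D + n := by field_simp
  rw [h, Int.floor_add_intCast]
  push_cast
  ring

lemma dirX_eq_modD {D x y : ℝ} (hD : 0 < D) (hx : x ∈ Set.Ico 0 D)
    (hy : y ∈ Set.Ico 0 D) : dirX D x y = modD D (y - x) := by
  unfold dirX
  split_ifs with h
  · exact (modD_eq_self hD (by linarith) (by linarith [hx.1, hy.2])).symm
  · push_neg at h
    have h1 : modD D (y - x + (1 : ℤ) * D) = modD D (y - x) := modD_add_int hD.ne' _ 1
    push_cast at h1
    have h2 : modD D (y - x + 1 * D) = y - x + 1 * D :=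
      modD_eq_self hD (by linarith [hy.1, hx.2]) (by linarith [hy.1])
    rw [← h1, h2]; ring

lemma sep_eq {D T x0 y0 : ℝ} (hD : 0 < D)
    (hx0 : x0 ∈ Set.Ico 0 D) (hy0 : y0 ∈ Set.Ico 0 D) (vx vy : ℝ) :
    sep D T x0 y0 vx vy =
      min (modD D (dirX D x0 y0 + T * (vy - vx)))
          (modD D (-(dirX D x0 y0 + T * (vy - vx)))) := by
  have hxT : modD D (x0 + T * vx) ∈ Set.Ico 0 D := ⟨modD_nonneg hD _, modD_lt hD _⟩
  have hyT : modD D (y0 + T * vy) ∈ Set.Ico 0 D := ⟨modD_nonneg hD _, modD_lt hD _⟩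
  have hd0m : dirX D x0 y0 = modD D (y0 - x0) := dirX_eq_modD hD hx0 hy0
  set n : ℤ := ⌊(y0 - x0) / D⌋ + ⌊(x0 + T * vx) / D⌋ - ⌊(y0 + T * vy) / D⌋ with hn
  have key : modD D (y0 + T * vy) - modD D (x0 + T * vx)
      = (dirX D x0 y0 + T * (vy - vx)) + (n : ℝ) * D := by
    rw [hd0m]
    unfold modD
    push_cast [hn]
    ring
  have h1 : modD D (modD D (y0 + T * vy) - modD D (x0 + T * vx))
      = modD D (dirX D x0 y0 + T * (vy - vx)) := by
    rw [key]; exact modD_add_int hD.ne' _ n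
  have h2 : modD D (modD D (x0 + T * vx) - modD D (y0 + T * vy))
      = modD D (-(dirX D x0 y0 + T * (vy - vx))) := by
    have key2 : modD D (x0 + T * vx) - modD D (y0 + T * vy)
        = (-(dirX D x0 y0 + T * (vy - vx))) + ((-n : ℤ) : ℝ) * D := by
      push_cast; linarith [key]
    rw [key2]; exact modD_add_int hD.ne' _ _
  unfold sep dirY
  rw [dirX_eq_modD hD hxT hyT, dirX_eq_modD hD hyT hxT]
  split_ifs with h
  · have hz : modD D (0 : ℝ) = 0 := modD_eq_self hD le_rfl hD
    rw [← h1, ← h2, h, sub_self, hz]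
    simp
  · rw [h1, h2]

/-- Cooperative game, case d₀ + d > D/2: there is a feasible pair of speeds reaching
the diametric separation D/2, the final separation never exceeds D/2, and it equals
D/2 exactly when d₀ + T·(v_y − v_x) = D/2. -/
theorem coop_large_distance
    (D T vmin vmax x0 y0 d0 d : ℝ)
    (hD : 0 < D) (hvmin : 0 < vmin) (hvv : vmin < vmax) (hT : 0 < T)
    (hshort : T * vmax < D / 2)
    (hx0 : x0 ∈ Set.Ico 0 D) (hy0 : y0 ∈ Set.Ico 0 D)
    (hd0 : d0 = dirX D x0 y0) (hd : d = T * (vmax - vmin))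
    (hd0le : d0 ≤ dirY D x0 y0)
    (hsum : D / 2 < d0 + d) :
    (∃ vx ∈ Set.Icc vmin vmax, ∃ vy ∈ Set.Icc vmin vmax,
      d0 + T * (vy - vx) = D / 2) ∧
    (∀ vx ∈ Set.Icc vmin vmax, ∀ vy ∈ Set.Icc vmin vmax,
      sep D T x0 y0 vx vy ≤ D / 2) ∧
    (∀ vx ∈ Set.Icc vmin vmax, ∀ vy ∈ Set.Icc vmin vmax,
      (sep D T x0 y0 vx vy = D / 2 ↔ d0 + T * (vy - vx) = D / 2)) := by
  -- basic bounds on d0 and d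
  have hd0nn : 0 ≤ d0 := by
    rw [hd0]; unfold dirX
    split_ifs with h
    · linarith
    · push_neg at h; linarith [hy0.1, hx0.2]
  have hd0half : d0 ≤ D / 2 := by
    rw [hd0]
    rw [hd0] at hd0le
    unfold dirY at hd0le
    unfold dirX at hd0le ⊢
    split_ifs at hd0le ⊢ with h1 h2 <;> linarith
  have hdnn : 0 ≤ d := by nlinarith
  have hdhalf : d < D / 2 := by nlinarith
  -- the combined statement about sep
  have main : ∀ vx ∈ Set.Icc vmin vmax, ∀ vy ∈ Set.Icc vmin vmax,
      sep D T x0 y0 vx vy ≤ D / 2 ∧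
      (sep D T x0 y0 vx vy = D / 2 ↔ d0 + T * (vy - vx) = D / 2) := by
    intro vx hvx vy hvy
    have hs := sep_eq (T := T) hD hx0 hy0 vx vy
    rw [← hd0] at hs
    set δ := d0 + T * (vy - vx) with hδ
    have hub : δ ≤ d0 + d := by
      have : T * (vy - vx) ≤ T * (vmax - vmin) := by
        nlinarith [hvx.1, hvy.2]
      rw [hd]; linarith
    have hlb : d0 - d ≤ δ := by
      have : T * (vmin - vmax) ≤ T * (vy - vx) := by
        nlinarith [hvx.2, hvy.1]
      rw [hd]; nlinarith
    have hδD : δ < D := by linarith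
    have hδlb : -(D / 2) < δ := by linarith
    rcases lt_trichotomy δ 0 with h | h | h
    · -- δ < 0
      have e1 : modD D δ = δ + D := by
        have h1 := modD_add_int (D := D) hD.ne' δ 1
        push_cast at h1
        rw [show δ + 1 * D = δ + D by ring] at h1
        rw [← h1]
        exact modD_eq_self hD (by linarith) (by linarith)
      have e2 : modD D (-δ) = -δ :=
        modD_eq_self hD (by linarith) (by linarith)
      rw [hs, e1, e2]
      have hmin : min (δ + D) (-δ) = -δ := min_eq_right (by linarith)
      rw [hmin]
      constructor
      · linarith
      · constructor <;> intro hh <;> linarith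
    · -- δ = 0
      have e : modD D (0 : ℝ) = 0 := modD_eq_self hD le_rfl hD
      rw [hs, h, neg_zero, e]
      simp only [min_self]
      exact ⟨by linarith, by constructor <;> intro hh <;> linarith⟩
    · -- δ > 0
      have e1 : modD D δ = δ := modD_eq_self hD (by linarith) hδD
      have e2 : modD D (-δ) = D - δ := by
        have h1 := modD_add_int (D := D) hD.ne' (-δ) 1
        push_cast at h1
        rw [show -δ + 1 * D = D - δ by ring] at h1
        rw [← h1]
        exact modD_eq_self hD (by linarith) (by linarith)
      rw [hs, e1, e2]
      constructor
      · rcases le_total δ (D - δ) with hle | hle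
        · rw [min_eq_left hle]; linarith
        · rw [min_eq_right hle]; linarith
      · constructor
        · intro hh
          have ha : min δ (D - δ) ≤ δ := min_le_left _ _
          have hb : min δ (D - δ) ≤ D - δ := min_le_right _ _
          rw [hh] at ha hb
          linarith
        · intro hh
          rw [hh]
          have : D - D / 2 = D / 2 := by ring
          rw [this, min_self]
  refine ⟨?_, fun vx hvx vy hvy => (main vx hvx vy hvy).1,
    fun vx hvx vy hvy => (main vx hvx vy hvy).2⟩
  refine ⟨vmin, ⟨le_rfl, hvv.le⟩, vmin + (D / 2 - d0) / T, ⟨?_, ?_⟩, ?_⟩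
  · have : 0 ≤ (D / 2 - d0) / T := div_nonneg (by linarith) hT.le
    linarith
  · have : (D / 2 - d0) / T ≤ vmax - vmin := by
      rw [div_le_iff₀ hT]; nlinarith
    linarith
  · field_simp
    ring
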